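/- Discrete generalized Liouville identity (Theorem 3.3). Let γ₀, γ₁ : X → ℝ be strictly positive, let s = √(γ₁/γ₀) ∈ ℝ^X (componentwise), and let q̃ = −(L(γ₀)·s)/s ∈ ℝ^X (componentwise quotient). Then the geometric-mean weighted Laplacians satisfy the matrix identity L(γ₁) = diag(s) · (L(γ₀) + diag(q̃)) · diag(s). -/

import Mathlib

open Matrix BigOperators

/-- The geometric-mean weighted Laplacian on the line graph: for a strictly positive
conductivity `γ : X → ℝ`, the matrix with off-diagonal entries `-√(γ e · γ f)` for
adjacent `e, f`, zero for distinct non-adjacent pairs, and diagonal entries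
`∑_{f adjacent to e} √(γ e · γ f)`. -/
noncomputable def lineLap {X : Type*} [Fintype X] [DecidableEq X]
    (A : X → X → Prop) [DecidableRel A] (γ : X → ℝ) : Matrix X X ℝ :=
  Matrix.of fun e f =>
    if e = f then ∑ g ∈ Finset.univ.filter (fun g => A e g), Real.sqrt (γ e * γ g)
    else if A e f then -Real.sqrt (γ e * γ f) else 0

/-- Discrete generalized Liouville identity (Theorem 3.3):
`L(γ₁) = diag(s) (L(γ₀) + diag(qt)) diag(s)` with `s = √(γ₁/γ₀)` and
`qt = −(L(γ₀) s)/s` componentwise. -/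
lemma sqrt_key {a b c d : ℝ} (ha : 0 < a) (hb : 0 < b) (hc : 0 < c) (hd : 0 < d) :
    Real.sqrt (c / a) * Real.sqrt (a * b) * Real.sqrt (d / b) = Real.sqrt (c * d) := by
  rw [← Real.sqrt_mul (by positivity), ← Real.sqrt_mul (by positivity)]
  congr 1
  field_simp

theorem discrete_generalized_liouville
    {X : Type*} [Fintype X] [DecidableEq X]
    (A : X → X → Prop) [DecidableRel A]
    (hsymm : ∀ e f, A e f → A f e) (hirr : ∀ e, ¬ A e e)
    (γ₀ γ₁ : X → ℝ) (h₀ : ∀ e, 0 < γ₀ e) (h₁ : ∀ e, 0 < γ₁ e)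
    (s qt : X → ℝ)
    (hs : ∀ e, s e = Real.sqrt (γ₁ e / γ₀ e))
    (hq : ∀ e, qt e = -((lineLap A γ₀).mulVec s e) / s e) :
    lineLap A γ₁ =
      Matrix.diagonal s * (lineLap A γ₀ + Matrix.diagonal qt) * Matrix.diagonal s := by
  classical
  have hs0 : ∀ e, 0 < s e := fun e => by
    rw [hs]; exact Real.sqrt_pos.mpr (div_pos (h₁ e) (h₀ e))
  have hkey : ∀ e g, s e * Real.sqrt (γ₀ e * γ₀ g) * s g = Real.sqrt (γ₁ e * γ₁ g) := by
    intro e g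
    rw [hs, hs]
    exact sqrt_key (h₀ e) (h₀ g) (h₁ e) (h₁ g)
  ext e f
  have hR : (Matrix.diagonal s * (lineLap A γ₀ + Matrix.diagonal qt) * Matrix.diagonal s) e f
      = s e * ((lineLap A γ₀ e f) + Matrix.diagonal qt e f) * s f := by
    rw [Matrix.mul_diagonal, Matrix.diagonal_mul, Matrix.add_apply]
  rw [hR]
  by_cases hef : e = f
  · subst hef
    rw [Matrix.diagonal_apply_eq]
    have hterm : ∀ g, lineLap A γ₀ e g * s g
        = (if g = e then lineLap A γ₀ e e * s e else 0)
          + (if A e g then -(Real.sqrt (γ₀ e * γ₀ g) * s g) else 0) := by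
      intro g
      by_cases hg : g = e
      · subst hg
        rw [if_pos rfl, if_neg (hirr g), add_zero]
      · have hne : e ≠ g := fun h => hg h.symm
        by_cases hA : A e g
        · rw [if_neg hg, if_pos hA, zero_add]
          simp only [lineLap, Matrix.of_apply, if_neg hne, if_pos hA]
          ring
        · rw [if_neg hg, if_neg hA, zero_add]
          simp only [lineLap, Matrix.of_apply, if_neg hne, if_neg hA, zero_mul]
    have hmv : (lineLap A γ₀).mulVec s e
        = lineLap A γ₀ e e * s e
          - ∑ g ∈ Finset.univ.filter (fun g => A e g), Real.sqrt (γ₀ e * γ₀ g) * s g := by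
      rw [Matrix.mulVec, dotProduct]
      rw [Finset.sum_congr rfl (fun g _ => hterm g), Finset.sum_add_distrib]
      rw [Finset.sum_ite_eq' Finset.univ e, if_pos (Finset.mem_univ e)]
      rw [← Finset.sum_filter]
      rw [Finset.sum_neg_distrib]
      ring
    have hne : s e ≠ 0 := (hs0 e).ne'
    have h2 : s e * (lineLap A γ₀ e e + qt e) * s e
        = (∑ g ∈ Finset.univ.filter (fun g => A e g), Real.sqrt (γ₀ e * γ₀ g) * s g) * s e := by
      rw [hq, hmv]
      field_simp
      ring
    rw [h2]
    show lineLap A γ₁ e e = _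
    rw [show lineLap A γ₁ e e = ∑ g ∈ Finset.univ.filter (fun g => A e g),
        Real.sqrt (γ₁ e * γ₁ g) from by simp [lineLap]]
    rw [Finset.sum_mul]
    exact Finset.sum_congr rfl fun g _ => by rw [← hkey e g]; ring
  · rw [Matrix.diagonal_apply_ne _ hef, add_zero]
    by_cases hA : A e f
    · show lineLap A γ₁ e f = _
      simp only [lineLap, Matrix.of_apply, if_neg hef, if_pos hA]
      rw [← hkey e f]; ring
    · simp [lineLap, hef, hA]
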